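/- arXiv:2401.03840 — 3 statements merged into one kernel-verified Lean document; each statement's English description precedes it below -/
import Mathlib

section
/- Let (X, μ) be a measure space with μ a non-atomic positive measure, let g : X → [0,∞) be in L¹(X,μ) ∩ L²(X,μ), and let 0 < γ ≤ ∫_X g dμ. Then for every measurable v ≥ 0 with ∫_X v dμ = γ, one has ∫_X (v − g)² dμ ≥ ∫_X (max{λ + g, 0} − g)² dμ, where λ ∈ (−∞, 0] is chosen so that ∫_X max{λ + g, 0} dμ = γ. -/
open MeasureTheory

theorem stmt2 {X : Type*} [MeasurableSpace X] (μ : Measure X) [NullSingletonClass μ]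
    (g : X → ℝ) (hg0 : ∀ x, 0 ≤ g x)
    (hg1 : Integrable g μ) (hg2 : MemLp g 2 μ)
    (γ : ℝ) (hγpos : 0 < γ) (hγle : γ ≤ ∫ x, g x ∂μ)
    (lam : ℝ) (hlam : lam ≤ 0)
    (hconstraint : ∫ x, max (lam + g x) 0 ∂μ = γ)
    (v : X → ℝ) (hvmeas : AEMeasurable v μ) (hv0 : ∀ x, 0 ≤ v x)
    (hvint : ∫ x, v x ∂μ = γ) :
    ∫⁻ x, ENNReal.ofReal ((v x - g x) ^ 2) ∂μ ≥
      ∫⁻ x, ENNReal.ofReal ((max (lam + g x) 0 - g x) ^ 2) ∂μ := by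
  set u : X → ℝ := fun x => max (lam + g x) 0 with hu_def
  have hgmeas : AEMeasurable g μ := hg1.aemeasurable
  have hu_meas : AEMeasurable u μ := (hgmeas.const_add lam).max aemeasurable_const
  have hu_le : ∀ x, u x ≤ g x := fun x => max_le (by linarith [hg0 x]) (hg0 x)
  have hu0 : ∀ x, 0 ≤ u x := fun x => le_max_right _ _
  have hu_int : Integrable u μ :=
    hg1.mono' hu_meas.aestronglyMeasurable (Filter.Eventually.of_forall fun x => by
      rw [Real.norm_eq_abs, abs_of_nonneg (hu0 x)]; exact hu_le x)
  have hv_int : Integrable v μ := by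
    by_contra h
    rw [integral_undef h] at hvint
    linarith
  have key : ∀ x, (u x - g x)^2 + (-2*lam) * u x ≤ (v x - g x)^2 + (-2*lam) * v x := by
    intro x
    rcases le_or_gt 0 (lam + g x) with h | h
    · have hx : u x = lam + g x := max_eq_left h
      rw [hx]
      nlinarith [sq_nonneg (v x - g x - lam)]
    · have hx : u x = 0 := max_eq_right h.le
      rw [hx]
      nlinarith [hv0 x, hg0 x, mul_nonneg (hv0 x) (show (0:ℝ) ≤ v x - 2*g x - 2*lam by
        linarith [hv0 x])]
  have hnn : ∀ (w : X → ℝ), (∀ x, 0 ≤ w x) → ∀ x,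
      ENNReal.ofReal ((w x - g x)^2 + (-2*lam) * w x) =
      ENNReal.ofReal ((w x - g x)^2) + ENNReal.ofReal ((-2*lam) * w x) := fun w hw x =>
    ENNReal.ofReal_add (sq_nonneg _) (mul_nonneg (by linarith) (hw x))
  have hmono : ∫⁻ x, (ENNReal.ofReal ((u x - g x)^2) + ENNReal.ofReal ((-2*lam) * u x)) ∂μ ≤
      ∫⁻ x, (ENNReal.ofReal ((v x - g x)^2) + ENNReal.ofReal ((-2*lam) * v x)) ∂μ := by
    apply lintegral_mono fun x => ?_
    rw [← hnn u hu0 x, ← hnn v hv0 x]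
    exact ENNReal.ofReal_le_ofReal (key x)
  have hsplit : ∀ (w : X → ℝ), AEMeasurable w μ →
      ∫⁻ x, (ENNReal.ofReal ((w x - g x)^2) + ENNReal.ofReal ((-2*lam) * w x)) ∂μ =
      ∫⁻ x, ENNReal.ofReal ((w x - g x)^2) ∂μ + ∫⁻ x, ENNReal.ofReal ((-2*lam) * w x) ∂μ := by
    intro w hw
    exact lintegral_add_right' _ (ENNReal.measurable_ofReal.comp_aemeasurable (hw.const_mul _))
  have hterm : ∀ (w : X → ℝ), (∀ x, 0 ≤ w x) → Integrable w μ → ∫ x, w x ∂μ = γ →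
      ∫⁻ x, ENNReal.ofReal ((-2*lam) * w x) ∂μ = ENNReal.ofReal ((-2*lam) * γ) := by
    intro w hw hwint hwγ
    calc ∫⁻ x, ENNReal.ofReal ((-2*lam) * w x) ∂μ
        = ∫⁻ x, ENNReal.ofReal (-2*lam) * ENNReal.ofReal (w x) ∂μ := by
          simp_rw [← ENNReal.ofReal_mul (show (0:ℝ) ≤ -2*lam by linarith)]
      _ = ENNReal.ofReal (-2*lam) * ∫⁻ x, ENNReal.ofReal (w x) ∂μ :=
          lintegral_const_mul' _ _ (by simp)
      _ = ENNReal.ofReal (-2*lam) * ENNReal.ofReal γ := by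
          rw [← ofReal_integral_eq_lintegral_ofReal hwint (Filter.Eventually.of_forall hw), hwγ]
      _ = ENNReal.ofReal ((-2*lam)*γ) :=
          (ENNReal.ofReal_mul (show (0:ℝ) ≤ -2*lam by linarith)).symm
  rw [hsplit u hu_meas, hsplit v hvmeas, hterm u hu0 hu_int hconstraint,
    hterm v hv0 hv_int hvint] at hmono
  exact (ENNReal.add_le_add_iff_right ENNReal.ofReal_ne_top).mp hmono
end

section
/- Let F : {bounded open subsets of ℝ^{N−1} with ℋ^{N−1}-null boundary} → [0,∞) satisfy: translation invariance F(x' + ω) = F(ω); monotonicity F(ω₁) ≤ F(ω₂) for ω₁ ⊂ ω₂; superadditivity F(ω₁) + F(ω₂) ≤ F(ω₁ ∪ ω₂) for disjoint ω₁, ω₂; and the scaling F(αω) = α^{N−1} F(ω) for all α > 0. Then F(ω) = ℋ^{N−1}(ω) · F(Q') for every such ω, where Q' is the open unit cube of ℝ^{N−1}. -/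
open MeasureTheory Pointwise

/-- A "good" set: bounded, open, with `ℋ^{n}`-null (i.e. Lebesgue-null)
topological boundary, in the `n`-dimensional Euclidean space. -/
def GoodSet (n : ℕ) (ω : Set (EuclideanSpace ℝ (Fin n))) : Prop :=
  Bornology.IsBounded ω ∧ IsOpen ω ∧ volume (frontier ω) = 0

namespace Stmt12Aux

variable {n : ℕ}

lemma goodSet_empty : GoodSet n (∅ : Set (EuclideanSpace ℝ (Fin n))) :=
  ⟨Bornology.isBounded_empty, isOpen_empty, by simp⟩

lemma goodSet_ball (x : EuclideanSpace ℝ (Fin n)) (r : ℝ) :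
    GoodSet n (Metric.ball x r) := by
  refine ⟨Metric.isBounded_ball, Metric.isOpen_ball, ?_⟩
  rcases le_or_gt r 0 with h | h
  · simp [Metric.ball_eq_empty.2 h]
  · refine measure_mono_null ?_
      (MeasureTheory.Measure.addHaar_sphere_of_ne_zero volume x h.ne')
    rw [← Metric.closedBall_diff_ball, Metric.isOpen_ball.frontier_eq]
    exact Set.diff_subset_diff_left Metric.closure_ball_subset_closedBall

lemma goodSet_union {s t : Set (EuclideanSpace ℝ (Fin n))}
    (hs : GoodSet n s) (ht : GoodSet n t) : GoodSet n (s ∪ t) :=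
  ⟨hs.1.union ht.1, hs.2.1.union ht.2.1,
    measure_mono_null (frontier_union_subset s t)
      (measure_union_null (measure_mono_null Set.inter_subset_left hs.2.2)
        (measure_mono_null Set.inter_subset_right ht.2.2))⟩

lemma goodSet_biUnion {ι : Type*} [DecidableEq ι] (s : Finset ι)
    (B : ι → Set (EuclideanSpace ℝ (Fin n)))
    (h : ∀ i ∈ s, GoodSet n (B i)) : GoodSet n (⋃ i ∈ s, B i) := by
  induction s using Finset.induction_on with
  | empty => simpa using (goodSet_empty (n := n))
  | insert a s ha ih =>
    rw [Finset.set_biUnion_insert]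
    exact goodSet_union (h _ (Finset.mem_insert_self _ _))
      (ih fun i hi => h i (Finset.mem_insert_of_mem hi))

lemma sum_F_le (F : Set (EuclideanSpace ℝ (Fin n)) → ℝ)
    (hF0 : ∀ ω, GoodSet n ω → 0 ≤ F ω)
    (hsuper : ∀ ω₁ ω₂, GoodSet n ω₁ → GoodSet n ω₂ → Disjoint ω₁ ω₂ →
      F ω₁ + F ω₂ ≤ F (ω₁ ∪ ω₂))
    {ι : Type*} [DecidableEq ι] (s : Finset ι)
    (B : ι → Set (EuclideanSpace ℝ (Fin n)))
    (hgood : ∀ i ∈ s, GoodSet n (B i))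
    (hdisj : (s : Set ι).PairwiseDisjoint B) :
    ∑ i ∈ s, F (B i) ≤ F (⋃ i ∈ s, B i) := by
  induction s using Finset.induction_on with
  | empty => simpa using hF0 ∅ goodSet_empty
  | @insert a s ha ih =>
    have hgood' : ∀ i ∈ s, GoodSet n (B i) :=
      fun i hi => hgood i (Finset.mem_insert_of_mem hi)
    have hdisj' : (s : Set ι).PairwiseDisjoint B :=
      hdisj.subset (by intro i hi; simpa using Or.inr hi)
    have hd : Disjoint (B a) (⋃ i ∈ s, B i) := by
      simp only [Set.disjoint_iUnion_right]
      intro i hi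
      exact hdisj (by simp) (by simp [hi]) (fun h => ha (h ▸ hi))
    rw [Finset.sum_insert ha, Finset.set_biUnion_insert]
    calc F (B a) + ∑ i ∈ s, F (B i) ≤ F (B a) + F (⋃ i ∈ s, B i) :=
          add_le_add_right (ih hgood' hdisj') _
      _ ≤ F (B a ∪ ⋃ i ∈ s, B i) :=
          hsuper _ _ (hgood a (Finset.mem_insert_self _ _))
            (goodSet_biUnion s B hgood') hd

lemma volume_ne_top_of_isBounded {s : Set (EuclideanSpace ℝ (Fin n))}
    (hs : Bornology.IsBounded s) : volume s ≠ ⊤ := by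
  obtain ⟨R, hR⟩ := hs.subset_closedBall 0
  exact ne_top_of_le_ne_top measure_closedBall_lt_top.ne (measure_mono hR)

lemma F_ball (F : Set (EuclideanSpace ℝ (Fin n)) → ℝ)
    (htrans : ∀ ω, GoodSet n ω → ∀ x : EuclideanSpace ℝ (Fin n),
      F ((fun y => x + y) '' ω) = F ω)
    (hscale : ∀ ω, GoodSet n ω → ∀ α : ℝ, 0 < α → F (α • ω) = α ^ n * F ω)
    (x : EuclideanSpace ℝ (Fin n)) {r : ℝ} (hr : 0 < r) :
    F (Metric.ball x r) = r ^ n * F (Metric.ball (0 : EuclideanSpace ℝ (Fin n)) 1) := by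
  have h1 : (fun y => x + y) '' Metric.ball (0 : EuclideanSpace ℝ (Fin n)) r
      = Metric.ball x r := by
    ext z
    simp only [Set.mem_image, Metric.mem_ball, dist_zero_right, dist_eq_norm]
    constructor
    · rintro ⟨w, hw, rfl⟩; simpa [add_sub_cancel_left] using hw
    · intro h; exact ⟨z - x, by simpa using h, by abel⟩
  have h2 : Metric.ball (0 : EuclideanSpace ℝ (Fin n)) r
      = r • Metric.ball (0 : EuclideanSpace ℝ (Fin n)) 1 :=
    (smul_unitBall_of_pos hr).symm
  rw [← h1, htrans _ (goodSet_ball 0 r), h2, hscale _ (goodSet_ball 0 1) r hr]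

lemma exists_cover (U : Set (EuclideanSpace ℝ (Fin n))) (hU : IsOpen U)
    (hfin : volume U ≠ ⊤) {ε : ENNReal} (hε : ε ≠ 0) :
    ∃ u : Finset (EuclideanSpace ℝ (Fin n) × ℝ),
      (∀ p ∈ u, 0 < p.2 ∧ Metric.closedBall p.1 p.2 ⊆ U) ∧
      ((u : Set (EuclideanSpace ℝ (Fin n) × ℝ)).PairwiseDisjoint
        fun p => Metric.closedBall p.1 p.2) ∧
      volume U ≤ ∑ p ∈ u, volume (Metric.closedBall p.1 p.2) + ε := by
  classical
  rcases le_or_gt (volume U) ε with hle | hlt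
  · exact ⟨∅, by simp, by simp, by simpa using hle⟩
  set f : EuclideanSpace ℝ (Fin n) → Set ℝ :=
    fun x => {r | 0 < r ∧ Metric.closedBall x r ⊆ U} with hf_def
  have hf : ∀ x ∈ U, ∀ δ > 0, (f x ∩ Set.Ioo 0 δ).Nonempty := by
    intro x hx δ hδ
    obtain ⟨η, hη, hηU⟩ := Metric.isOpen_iff.1 hU x hx
    refine ⟨min (η / 2) (δ / 2), ⟨⟨by positivity, ?_⟩, by positivity, ?_⟩⟩
    · exact (Metric.closedBall_subset_ball
        (lt_of_le_of_lt (min_le_left _ _) (by linarith))).trans hηU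
    · exact lt_of_le_of_lt (min_le_right _ _) (by linarith)
  obtain ⟨t, r, tcount, tsub, hrf, hnull, tdisj⟩ :=
    Besicovitch.exists_disjoint_closedBall_covering_ae volume f U hf
      (fun _ => 1) (fun _ _ => one_pos)
  set A := ⋃ x ∈ t, Metric.closedBall x (r x) with hA
  have h1 : volume U ≤ volume A := by
    have hsub : U ⊆ (U \ A) ∪ A := by
      intro x hx
      by_cases h : x ∈ A
      · exact Or.inr h
      · exact Or.inl ⟨hx, h⟩
    calc volume U ≤ volume ((U \ A) ∪ A) := measure_mono hsub
      _ ≤ volume (U \ A) + volume A := measure_union_le _ _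
      _ = volume A := by rw [hnull, zero_add]
  have hmeas : volume U ≤ ∑' p : t, volume (Metric.closedBall p.1 (r p.1)) := by
    rwa [hA, measure_biUnion tcount tdisj
      (fun x _ => measurableSet_closedBall)] at h1
  have hsub2 : volume U - ε < ∑' p : t, volume (Metric.closedBall p.1 (r p.1)) :=
    lt_of_lt_of_le (ENNReal.sub_lt_self hfin (pos_of_gt hlt).ne' hε) hmeas
  rw [ENNReal.tsum_eq_iSup_sum] at hsub2
  obtain ⟨u₀, hu₀⟩ := lt_iSup_iff.1 hsub2
  set g : t → EuclideanSpace ℝ (Fin n) × ℝ := fun p => (p.1, r p.1) with hg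
  have hginj : ∀ a ∈ u₀, ∀ b ∈ u₀, g a = g b → a = b :=
    fun a _ b _ hab => Subtype.ext (congrArg Prod.fst hab)
  refine ⟨u₀.image g, ?_, ?_, ?_⟩
  · intro p hp
    simp only [Finset.mem_image] at hp
    obtain ⟨q, _, rfl⟩ := hp
    have h3 := hrf q.1 q.2
    exact ⟨h3.2.1, h3.1.2⟩
  · intro p hp q hq hpq
    simp only [Finset.coe_image, Set.mem_image] at hp hq
    obtain ⟨p', _, rfl⟩ := hp
    obtain ⟨q', _, rfl⟩ := hq
    exact tdisj p'.2 q'.2 (fun h => hpq (by rw [hg]; simp only [h]; rfl))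
  · rw [Finset.sum_image hginj]
    exact tsub_le_iff_right.1 hu₀.le

lemma cover_sum_toReal (u : Finset (EuclideanSpace ℝ (Fin n) × ℝ))
    (hpos : ∀ p ∈ u, 0 < p.2) {ε : ℝ} (hε : 0 ≤ ε) :
    ((∑ p ∈ u, volume (Metric.closedBall p.1 p.2)) + ENNReal.ofReal ε).toReal
      = (∑ p ∈ u, p.2 ^ n) *
          (volume (Metric.ball (0 : EuclideanSpace ℝ (Fin n)) 1)).toReal + ε := by
  have hfin : (∑ p ∈ u, volume (Metric.closedBall p.1 p.2)) ≠ ⊤ :=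
    (ENNReal.sum_lt_top.2 fun p _ => measure_closedBall_lt_top).ne
  rw [ENNReal.toReal_add hfin ENNReal.ofReal_ne_top, ENNReal.toReal_ofReal hε,
    ENNReal.toReal_sum (fun p _ => measure_closedBall_lt_top.ne), Finset.sum_mul]
  congr 1
  refine Finset.sum_congr rfl fun p hp => ?_
  rw [MeasureTheory.Measure.addHaar_closedBall volume p.1 (hpos p hp).le,
    finrank_euclideanSpace_fin, ENNReal.toReal_mul,
    ENNReal.toReal_ofReal (pow_nonneg (hpos p hp).le _)]

lemma key (F : Set (EuclideanSpace ℝ (Fin n)) → ℝ)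
    (hF0 : ∀ ω, GoodSet n ω → 0 ≤ F ω)
    (htrans : ∀ ω, GoodSet n ω → ∀ x : EuclideanSpace ℝ (Fin n),
      F ((fun y => x + y) '' ω) = F ω)
    (hmono : ∀ ω₁ ω₂, GoodSet n ω₁ → GoodSet n ω₂ → ω₁ ⊆ ω₂ → F ω₁ ≤ F ω₂)
    (hsuper : ∀ ω₁ ω₂, GoodSet n ω₁ → GoodSet n ω₂ → Disjoint ω₁ ω₂ →
      F ω₁ + F ω₂ ≤ F (ω₁ ∪ ω₂))
    (hscale : ∀ ω, GoodSet n ω → ∀ α : ℝ, 0 < α → F (α • ω) = α ^ n * F ω)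
    (ω : Set (EuclideanSpace ℝ (Fin n))) (hω : GoodSet n ω) :
    F ω * (volume (Metric.ball (0 : EuclideanSpace ℝ (Fin n)) 1)).toReal
      = (volume ω).toReal * F (Metric.ball (0 : EuclideanSpace ℝ (Fin n)) 1) := by
  classical
  set c := F (Metric.ball (0 : EuclideanSpace ℝ (Fin n)) 1) with hc_def
  set v := (volume (Metric.ball (0 : EuclideanSpace ℝ (Fin n)) 1)).toReal with hv_def
  have hc : 0 ≤ c := hF0 _ (goodSet_ball 0 1)
  have hvfin : volume (Metric.ball (0 : EuclideanSpace ℝ (Fin n)) 1) ≠ ⊤ :=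
    measure_ball_lt_top.ne
  have hv : 0 < v := ENNReal.toReal_pos (Metric.measure_ball_pos volume 0 one_pos).ne' hvfin
  have hωfin : volume ω ≠ ⊤ := volume_ne_top_of_isBounded hω.1
  have hFω : 0 ≤ F ω := hF0 ω hω
  -- lower bound
  have lower : ∀ ε : ℝ, 0 < ε → (volume ω).toReal * c ≤ F ω * v + ε * c := by
    intro ε hε
    obtain ⟨u, hu1, hu2, hu3⟩ := exists_cover ω hω.2.1 hωfin
      (ε := ENNReal.ofReal ε) (ENNReal.ofReal_pos.2 hε).ne'
    set S := ∑ p ∈ u, p.2 ^ n with hS_def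
    have hball : ∀ p ∈ u, GoodSet n (Metric.ball p.1 p.2) := fun p _ => goodSet_ball _ _
    have hdisjball : (u : Set (EuclideanSpace ℝ (Fin n) × ℝ)).PairwiseDisjoint
        fun p => Metric.ball p.1 p.2 := fun p hp q hq hpq =>
      (hu2 hp hq hpq).mono Metric.ball_subset_closedBall Metric.ball_subset_closedBall
    have hgoodU : GoodSet n (⋃ p ∈ u, Metric.ball p.1 p.2) := goodSet_biUnion u _ hball
    have hSc : S * c ≤ F ω := by
      have h1 : ∑ p ∈ u, F (Metric.ball p.1 p.2) ≤ F (⋃ p ∈ u, Metric.ball p.1 p.2) :=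
        sum_F_le F hF0 hsuper u _ hball hdisjball
      have h2 : F (⋃ p ∈ u, Metric.ball p.1 p.2) ≤ F ω :=
        hmono _ _ hgoodU hω (Set.iUnion₂_subset fun p hp =>
          Metric.ball_subset_closedBall.trans (hu1 p hp).2)
      have h3 : ∑ p ∈ u, F (Metric.ball p.1 p.2) = S * c := by
        rw [hS_def, Finset.sum_mul]
        exact Finset.sum_congr rfl fun p hp => F_ball F htrans hscale p.1 (hu1 p hp).1
      linarith
    have hvol2 : (volume ω).toReal ≤ S * v + ε := by
      have hne : (∑ p ∈ u, volume (Metric.closedBall p.1 p.2)) + ENNReal.ofReal ε ≠ ⊤ :=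
        ENNReal.add_ne_top.2 ⟨(ENNReal.sum_lt_top.2 fun p _ =>
          measure_closedBall_lt_top).ne, ENNReal.ofReal_ne_top⟩
      have h4 := ENNReal.toReal_mono hne hu3
      rwa [cover_sum_toReal u (fun p hp => (hu1 p hp).1) hε.le] at h4
    have h5 : (volume ω).toReal * c ≤ (S * v + ε) * c := mul_le_mul_of_nonneg_right hvol2 hc
    have h6 : (S * c) * v ≤ F ω * v := mul_le_mul_of_nonneg_right hSc hv.le
    nlinarith [h5, h6]
  -- upper bound
  have upper : ∀ ε : ℝ, 0 < ε → F ω * v ≤ (volume ω).toReal * c + ε * c := by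
    intro ε hε
    obtain ⟨R, hR⟩ := (hω.1.closure).subset_closedBall 0
    set M := |R| + 1 with hM_def
    have hM0 : 0 < M := by positivity
    have hcl : closure ω ⊆ Metric.ball 0 M :=
      hR.trans (Metric.closedBall_subset_ball (by
        have := le_abs_self R; rw [hM_def]; linarith))
    set U := Metric.ball (0 : EuclideanSpace ℝ (Fin n)) M \ closure ω with hU_def
    have hUopen : IsOpen U := Metric.isOpen_ball.sdiff isClosed_closure
    have hUfin : volume U ≠ ⊤ :=
      ne_top_of_le_ne_top measure_ball_lt_top.ne (measure_mono Set.diff_subset)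
    obtain ⟨u, hu1, hu2, hu3⟩ := exists_cover U hUopen hUfin
      (ε := ENNReal.ofReal ε) (ENNReal.ofReal_pos.2 hε).ne'
    set S := ∑ p ∈ u, p.2 ^ n with hS_def
    have hball : ∀ p ∈ u, GoodSet n (Metric.ball p.1 p.2) := fun p _ => goodSet_ball _ _
    have hdisjball : (u : Set (EuclideanSpace ℝ (Fin n) × ℝ)).PairwiseDisjoint
        fun p => Metric.ball p.1 p.2 := fun p hp q hq hpq =>
      (hu2 hp hq hpq).mono Metric.ball_subset_closedBall Metric.ball_subset_closedBall
    set A := ⋃ p ∈ u, Metric.ball p.1 p.2 with hA_def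
    have hgoodA : GoodSet n A := goodSet_biUnion u _ hball
    have hAU : A ⊆ U := Set.iUnion₂_subset fun p hp =>
      Metric.ball_subset_closedBall.trans (hu1 p hp).2
    have hdisjωA : Disjoint ω A := by
      refine Set.disjoint_left.2 fun x hx hx' => ?_
      exact (hAU hx').2 (subset_closure hx)
    have hSA : S * c ≤ F A := by
      have h1 : ∑ p ∈ u, F (Metric.ball p.1 p.2) ≤ F A :=
        sum_F_le F hF0 hsuper u _ hball hdisjball
      have h3 : ∑ p ∈ u, F (Metric.ball p.1 p.2) = S * c := by
        rw [hS_def, Finset.sum_mul]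
        exact Finset.sum_congr rfl fun p hp => F_ball F htrans hscale p.1 (hu1 p hp).1
      linarith
    have hcomb : F ω + S * c ≤ M ^ n * c := by
      have h1 : F ω + F A ≤ F (ω ∪ A) := hsuper _ _ hω hgoodA hdisjωA
      have h2 : F (ω ∪ A) ≤ F (Metric.ball 0 M) :=
        hmono _ _ (goodSet_union hω hgoodA) (goodSet_ball 0 M)
          (Set.union_subset ((subset_closure).trans hcl) (hAU.trans Set.diff_subset))
      have h3 : F (Metric.ball (0 : EuclideanSpace ℝ (Fin n)) M) = M ^ n * c :=
        F_ball F htrans hscale 0 hM0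
      linarith [hSA]
    have hclosvol : volume (closure ω) = volume ω := by
      apply le_antisymm
      · calc volume (closure ω) = volume (ω ∪ frontier ω) := by
              rw [← closure_eq_self_union_frontier]
          _ ≤ volume ω + volume (frontier ω) := measure_union_le _ _
          _ = volume ω := by rw [hω.2.2, add_zero]
      · exact measure_mono subset_closure
    have hvolball : volume (Metric.ball (0 : EuclideanSpace ℝ (Fin n)) M)
        ≤ volume U + volume ω := by
      have hsplit : Metric.ball (0 : EuclideanSpace ℝ (Fin n)) M ⊆ U ∪ closure ω := by
        intro x hx
        by_cases h : x ∈ closure ω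
        · exact Or.inr h
        · exact Or.inl ⟨hx, h⟩
      calc volume (Metric.ball (0 : EuclideanSpace ℝ (Fin n)) M)
          ≤ volume U + volume (closure ω) :=
            le_trans (measure_mono hsplit) (measure_union_le _ _)
        _ = volume U + volume ω := by rw [hclosvol]
    have hvol2 : M ^ n * v ≤ S * v + ε + (volume ω).toReal := by
      have hchain : volume (Metric.ball (0 : EuclideanSpace ℝ (Fin n)) M)
          ≤ ((∑ p ∈ u, volume (Metric.closedBall p.1 p.2)) + ENNReal.ofReal ε)
            + volume ω := le_trans hvolball (add_le_add_left hu3 _)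
      have hne : ((∑ p ∈ u, volume (Metric.closedBall p.1 p.2)) + ENNReal.ofReal ε)
          + volume ω ≠ ⊤ :=
        ENNReal.add_ne_top.2 ⟨ENNReal.add_ne_top.2 ⟨(ENNReal.sum_lt_top.2 fun p _ =>
          measure_closedBall_lt_top).ne, ENNReal.ofReal_ne_top⟩, hωfin⟩
      have h4 := ENNReal.toReal_mono hne hchain
      rw [ENNReal.toReal_add (ENNReal.add_ne_top.2 ⟨(ENNReal.sum_lt_top.2 fun p _ =>
          measure_closedBall_lt_top).ne, ENNReal.ofReal_ne_top⟩) hωfin,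
        cover_sum_toReal u (fun p hp => (hu1 p hp).1) hε.le] at h4
      have h5 : (volume (Metric.ball (0 : EuclideanSpace ℝ (Fin n)) M)).toReal
          = M ^ n * v := by
        rw [MeasureTheory.Measure.addHaar_ball_of_pos volume 0 hM0,
          finrank_euclideanSpace_fin, ENNReal.toReal_mul,
          ENNReal.toReal_ofReal (pow_nonneg hM0.le _)]
      rw [h5] at h4
      linarith
    have h6 : (F ω + S * c) * v ≤ (M ^ n * c) * v := mul_le_mul_of_nonneg_right hcomb hv.le
    have h7 : (M ^ n * v) * c ≤ (S * v + ε + (volume ω).toReal) * c :=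
      mul_le_mul_of_nonneg_right hvol2 hc
    nlinarith [h6, h7]
  -- conclude
  apply le_antisymm
  · refine le_of_forall_sub_le fun ε hε => ?_
    rcases eq_or_lt_of_le hc with h0 | h0
    · have := upper 1 one_pos
      rw [← h0] at this ⊢
      simp only [mul_zero] at this ⊢
      linarith
    · have := upper (ε / c) (by positivity)
      have hcc : ε / c * c = ε := by field_simp
      linarith [this, hcc.le]
  · refine le_of_forall_sub_le fun ε hε => ?_
    rcases eq_or_lt_of_le hc with h0 | h0
    · rw [← h0]
      simp only [mul_zero]
      nlinarith [mul_nonneg hFω hv.le]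
    · have := lower (ε / c) (by positivity)
      have hcc : ε / c * c = ε := by field_simp
      linarith

lemma vol_pi (s : Fin n → Set ℝ) (hs : ∀ i, MeasurableSet (s i)) :
    volume {x : EuclideanSpace ℝ (Fin n) | ∀ i, x i ∈ s i} = ∏ i, volume (s i) := by
  have h1 : {x : EuclideanSpace ℝ (Fin n) | ∀ i, x i ∈ s i}
      = (MeasurableEquiv.toLp 2 (Fin n → ℝ)).symm ⁻¹' (Set.pi Set.univ s) := by
    ext x
    exact ⟨fun h i _ => h i, fun h i => h i (Set.mem_univ i)⟩
  rw [h1, (EuclideanSpace.volume_preserving_symm_measurableEquiv_toLp (Fin n)).measure_preimage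
    ((MeasurableSet.univ_pi fun i => hs i).nullMeasurableSet), volume_pi_pi]

end Stmt12Aux

open Stmt12Aux in
theorem stmt12 (n : ℕ) (F : Set (EuclideanSpace ℝ (Fin n)) → ℝ)
    (hF0 : ∀ ω, GoodSet n ω → 0 ≤ F ω)
    (htrans : ∀ ω, GoodSet n ω → ∀ x : EuclideanSpace ℝ (Fin n),
      F ((fun y => x + y) '' ω) = F ω)
    (hmono : ∀ ω₁ ω₂, GoodSet n ω₁ → GoodSet n ω₂ → ω₁ ⊆ ω₂ → F ω₁ ≤ F ω₂)
    (hsuper : ∀ ω₁ ω₂, GoodSet n ω₁ → GoodSet n ω₂ → Disjoint ω₁ ω₂ →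
      F ω₁ + F ω₂ ≤ F (ω₁ ∪ ω₂))
    (hscale : ∀ ω, GoodSet n ω → ∀ α : ℝ, 0 < α → F (α • ω) = α ^ n * F ω)
    (ω : Set (EuclideanSpace ℝ (Fin n))) (hω : GoodSet n ω) :
    F ω = (volume ω).toReal *
      F {x : EuclideanSpace ℝ (Fin n) | ∀ i, x i ∈ Set.Ioo (-(1 : ℝ) / 2) (1 / 2)} := by
  classical
  set Q : Set (EuclideanSpace ℝ (Fin n)) :=
    {x | ∀ i, x i ∈ Set.Ioo (-(1 : ℝ) / 2) (1 / 2)} with hQ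
  have hQpi : Q = (WithLp.ofLp ⁻¹' Set.pi Set.univ (fun _ : Fin n => Set.Ioo (-(1 : ℝ) / 2) (1 / 2)) :
      Set (EuclideanSpace ℝ (Fin n))) := by
    ext x; exact ⟨fun h i _ => h i, fun h i => h i (Set.mem_univ i)⟩
  set QI : Set (EuclideanSpace ℝ (Fin n)) :=
    (WithLp.ofLp ⁻¹' Set.pi Set.univ (fun _ : Fin n => Set.Icc (-(1 : ℝ) / 2) (1 / 2))) with hQI
  have hvolQ : volume Q = 1 := by
    rw [hQ, vol_pi _ (fun i => measurableSet_Ioo)]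
    simp only [Real.volume_Ioo]
    norm_num
  have hvolQI : volume QI = 1 := by
    have h : QI = {x : EuclideanSpace ℝ (Fin n) | ∀ i, x i ∈ Set.Icc (-(1 : ℝ) / 2) (1 / 2)} := by
      ext x; exact ⟨fun h i => h i (Set.mem_univ i), fun h i _ => h i⟩
    rw [h, vol_pi _ (fun i => measurableSet_Icc)]
    simp only [Real.volume_Icc]
    norm_num
  have hQsub : Q ⊆ QI := by
    rw [hQpi, hQI]
    exact Set.preimage_mono (Set.pi_mono fun i _ => Set.Ioo_subset_Icc_self)
  have hopen : IsOpen Q := by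
    rw [hQpi]; exact (isOpen_set_pi Set.finite_univ fun _ _ => isOpen_Ioo).preimage (PiLp.homeomorph 2 _).continuous
  have hcompact : IsCompact QI := (PiLp.homeomorph 2 _).isCompact_preimage.2 (isCompact_univ_pi fun _ => isCompact_Icc)
  have hbounded : Bornology.IsBounded Q := hcompact.isBounded.subset hQsub
  have hfrontier : volume (frontier Q) = 0 := by
    have h1 : frontier Q ⊆ QI \ Q := by
      rw [hopen.frontier_eq]
      exact Set.diff_subset_diff_left (hcompact.isClosed.closure_subset_iff.2 hQsub)
    refine measure_mono_null h1 ?_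
    rw [measure_diff hQsub hopen.measurableSet.nullMeasurableSet
      (by rw [hvolQ]; exact ENNReal.one_ne_top), hvolQ, hvolQI, tsub_self]
  have hQgood : GoodSet n Q := ⟨hbounded, hopen, hfrontier⟩
  have hv : 0 < (volume (Metric.ball (0 : EuclideanSpace ℝ (Fin n)) 1)).toReal :=
    ENNReal.toReal_pos (Metric.measure_ball_pos volume 0 one_pos).ne'
      measure_ball_lt_top.ne
  have key1 := key F hF0 htrans hmono hsuper hscale ω hω
  have key2 := key F hF0 htrans hmono hsuper hscale Q hQgood
  rw [hvolQ] at key2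
  simp only [ENNReal.toReal_one, one_mul] at key2
  refine mul_right_cancel₀ hv.ne' ?_
  rw [key1, ← key2]
  ring
end

section
/- Let ρ_h ∈ L¹(Q_{x₀,δ}) be nonnegative and u_h ∈ W^{2,2}(Q_{x₀,δ}; ℝ^d). If λ_h ≤ 0 satisfies ∫ max{λ_h + |∇²u_h|, 0} dx = ∫ ρ_h dx over Q_{x₀,δ}, then ∫_{Q_{x₀,δ}} (1/ε)W(∇u_h) + ε|∇²u_h|² + ε(ρ_h − |∇²u_h|)² dx ≥ ∫_{Q_{x₀,δ}} (1/ε)W(∇u_h) + ε|∇²u_h|² + ε min{λ_h², |∇²u_h|²} dx. -/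
open MeasureTheory

lemma key_ineq (lam r w : ℝ) (hlam : lam ≤ 0) (hr : 0 ≤ r) (hw : 0 ≤ w) :
    min (lam ^ 2) (w ^ 2) + 2 * lam * (r - max (lam + w) 0) ≤ (r - w) ^ 2 := by
  rcases le_or_gt 0 (lam + w) with h | h
  · rw [max_eq_left h, min_eq_left (by nlinarith)]
    nlinarith [sq_nonneg (r - w - lam)]
  · rw [max_eq_right h.le, min_eq_right (by nlinarith)]
    nlinarith [mul_nonneg hr hr, mul_nonneg hr hw]

lemma aux_lintegral {α : Type*} [MeasurableSpace α] {μ : Measure α} [IsFiniteMeasure μ]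
    {w ρ : α → ℝ} (hw_meas : Measurable w) (hw0 : ∀ x, 0 ≤ w x)
    (hw_int : Integrable w μ) (hρ0 : ∀ x, 0 ≤ ρ x) (hρint : Integrable ρ μ)
    {lam ε : ℝ} (hlam : lam ≤ 0) (hε : 0 < ε)
    (hmass : ∫ x, max (lam + w x) 0 ∂μ = ∫ x, ρ x ∂μ) :
    ∫⁻ x, ENNReal.ofReal (ε * min (lam ^ 2) (w x ^ 2)) ∂μ ≤
      ∫⁻ x, ENNReal.ofReal (ε * (ρ x - w x) ^ 2) ∂μ := by
  have ht_meas : Measurable fun x => max (lam + w x) 0 :=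
    (measurable_const.add hw_meas).max measurable_const
  have ht_int : Integrable (fun x => max (lam + w x) 0) μ := by
    refine hw_int.mono ht_meas.aestronglyMeasurable (ae_of_all _ fun x => ?_)
    rw [Real.norm_eq_abs, Real.norm_eq_abs, abs_of_nonneg (le_max_right _ _),
      abs_of_nonneg (hw0 x)]
    exact max_le (by linarith [hw0 x]) (hw0 x)
  have hB0 : ∀ x, 0 ≤ ε * min (lam ^ 2) (w x ^ 2) := fun x =>
    mul_nonneg hε.le (le_min (sq_nonneg _) (sq_nonneg _))
  have hB_int : Integrable (fun x => ε * min (lam ^ 2) (w x ^ 2)) μ := by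
    refine Integrable.mono' (integrable_const (ε * lam ^ 2))
      (measurable_const.mul ((measurable_const.min (hw_meas.pow measurable_const)))).aestronglyMeasurable
      (ae_of_all _ fun x => ?_)
    rw [Real.norm_eq_abs, abs_of_nonneg (hB0 x)]
    exact mul_le_mul_of_nonneg_left (min_le_left _ _) hε.le
  by_cases hA : Integrable (fun x => ε * (ρ x - w x) ^ 2) μ
  · rw [← ofReal_integral_eq_lintegral_ofReal hA (ae_of_all _ fun x => by positivity),
      ← ofReal_integral_eq_lintegral_ofReal hB_int (ae_of_all _ fun x => hB0 x)]
    apply ENNReal.ofReal_le_ofReal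
    have h0 : ∫ x, (ρ x - max (lam + w x) 0) ∂μ = 0 := by
      rw [integral_sub hρint ht_int, hmass, sub_self]
    have hsub : Integrable (fun x => (2 * ε * lam) * (ρ x - max (lam + w x) 0)) μ :=
      ((hρint.sub ht_int).const_mul _)
    have hsum : Integrable
        (fun x => ε * min (lam ^ 2) (w x ^ 2) + (2 * ε * lam) * (ρ x - max (lam + w x) 0)) μ :=
      hB_int.add hsub
    calc ∫ x, ε * min (lam ^ 2) (w x ^ 2) ∂μ
        = ∫ x, (ε * min (lam ^ 2) (w x ^ 2)
            + (2 * ε * lam) * (ρ x - max (lam + w x) 0)) ∂μ := by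
          have h0' : ∫ x, 2 * ε * lam * (ρ x - max (lam + w x) 0) ∂μ = 0 := by
            rw [integral_const_mul, h0, mul_zero]
          rw [integral_add hB_int hsub, h0', add_zero]
      _ ≤ ∫ x, ε * (ρ x - w x) ^ 2 ∂μ := by
          refine integral_mono hsum hA fun x => ?_
          have h := key_ineq lam (ρ x) (w x) hlam (hρ0 x) (hw0 x)
          nlinarith [mul_le_mul_of_nonneg_left h hε.le]
  · have hasm : AEStronglyMeasurable (fun x => ε * (ρ x - w x) ^ 2) μ := by
      have h1 : AEStronglyMeasurable (fun x => ρ x - w x) μ :=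
        hρint.aestronglyMeasurable.sub hw_meas.aestronglyMeasurable
      exact aestronglyMeasurable_const.mul (h1.mul h1 |>.congr
        (ae_of_all _ fun x => by simp [Pi.mul_apply, sq]))
    have h1 : ¬ HasFiniteIntegral (fun x => ε * (ρ x - w x) ^ 2) μ := fun h => hA ⟨hasm, h⟩
    rw [HasFiniteIntegral, not_lt, top_le_iff] at h1
    have h2 : ∫⁻ x, ENNReal.ofReal (ε * (ρ x - w x) ^ 2) ∂μ = ⊤ := by
      rw [← h1]
      exact lintegral_congr fun x => (Real.enorm_eq_ofReal (by positivity)).symm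
    rw [h2]; exact le_top

/-- The open cube of center `x₀` and half-side `δ`. -/
def openCube (N : ℕ) (x₀ : EuclideanSpace ℝ (Fin N)) (δ : ℝ) :
    Set (EuclideanSpace ℝ (Fin N)) :=
  {x | ∀ i, x i ∈ Set.Ioo (x₀ i - δ) (x₀ i + δ)}

theorem stmt17 (N d : ℕ) (x₀ : EuclideanSpace ℝ (Fin N)) (δ : ℝ) (hδ : 0 < δ)
    (W : (EuclideanSpace ℝ (Fin N) →L[ℝ] EuclideanSpace ℝ (Fin d)) → ℝ)
    (hW0 : ∀ ξ, 0 ≤ W ξ) (hWcont : Continuous W)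
    (ε : ℝ) (hε : 0 < ε)
    (u : EuclideanSpace ℝ (Fin N) → EuclideanSpace ℝ (Fin d))
    (hu : ContDiff ℝ 2 u)
    (hL2 : MemLp (fun x => ‖iteratedFDeriv ℝ 2 u x‖) 2
      (volume.restrict (openCube N x₀ δ)))
    (ρ : EuclideanSpace ℝ (Fin N) → ℝ) (hρ0 : ∀ x, 0 ≤ ρ x)
    (hρint : Integrable ρ (volume.restrict (openCube N x₀ δ)))
    (lam : ℝ) (hlam : lam ≤ 0)
    (hmass : ∫ x in openCube N x₀ δ, max (lam + ‖iteratedFDeriv ℝ 2 u x‖) 0 =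
      ∫ x in openCube N x₀ δ, ρ x) :
    ∫⁻ x in openCube N x₀ δ, ENNReal.ofReal
        ((1 / ε) * W (fderiv ℝ u x) + ε * ‖iteratedFDeriv ℝ 2 u x‖ ^ 2 +
          ε * (ρ x - ‖iteratedFDeriv ℝ 2 u x‖) ^ 2) ≥
      ∫⁻ x in openCube N x₀ δ, ENNReal.ofReal
        ((1 / ε) * W (fderiv ℝ u x) + ε * ‖iteratedFDeriv ℝ 2 u x‖ ^ 2 +
          ε * min (lam ^ 2) (‖iteratedFDeriv ℝ 2 u x‖ ^ 2)) := by
  have hw_cont : Continuous fun x => ‖iteratedFDeriv ℝ 2 u x‖ :=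
    (hu.continuous_iteratedFDeriv (le_refl _)).norm
  -- finite measure on the cube
  have hQball : openCube N x₀ δ ⊆ Metric.closedBall x₀ (Real.sqrt N * δ) := by
    intro x hx
    rw [Metric.mem_closedBall, EuclideanSpace.dist_eq]
    have hb : ∀ i, dist (x i) (x₀ i) ^ 2 ≤ δ ^ 2 := by
      intro i
      have h1 := (hx i).1
      have h2 := (hx i).2
      rw [Real.dist_eq, sq_abs]
      nlinarith
    calc Real.sqrt (∑ i, dist (x i) (x₀ i) ^ 2)
        ≤ Real.sqrt (∑ _i : Fin N, δ ^ 2) :=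
          Real.sqrt_le_sqrt (Finset.sum_le_sum fun i _ => hb i)
      _ = Real.sqrt N * δ := by
          rw [Finset.sum_const, Finset.card_univ, Fintype.card_fin, nsmul_eq_mul,
            Real.sqrt_mul (Nat.cast_nonneg N), Real.sqrt_sq hδ.le]
  haveI : IsFiniteMeasure (volume.restrict (openCube N x₀ δ)) := by
    constructor
    rw [Measure.restrict_apply_univ]
    exact lt_of_le_of_lt (measure_mono hQball) measure_closedBall_lt_top
  have hw_int : Integrable (fun x => ‖iteratedFDeriv ℝ 2 u x‖)
      (volume.restrict (openCube N x₀ δ)) := hL2.integrable one_le_two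
  have hkey := aux_lintegral (μ := volume.restrict (openCube N x₀ δ))
    hw_cont.measurable (fun x => norm_nonneg _) hw_int hρ0 hρint hlam hε hmass
  -- split off the common part
  have hF0 : ∀ x, 0 ≤ (1 / ε) * W (fderiv ℝ u x) + ε * ‖iteratedFDeriv ℝ 2 u x‖ ^ 2 :=
    fun x => add_nonneg (mul_nonneg (by positivity) (hW0 _)) (by positivity)
  have hFmeas : Measurable fun x => ENNReal.ofReal
      ((1 / ε) * W (fderiv ℝ u x) + ε * ‖iteratedFDeriv ℝ 2 u x‖ ^ 2) :=
    (ENNReal.measurable_ofReal.comp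
      ((continuous_const.mul (hWcont.comp (hu.continuous_fderiv two_ne_zero))).add
        (continuous_const.mul (hw_cont.pow 2))).measurable)
  rw [ge_iff_le]
  calc ∫⁻ x in openCube N x₀ δ, ENNReal.ofReal
        ((1 / ε) * W (fderiv ℝ u x) + ε * ‖iteratedFDeriv ℝ 2 u x‖ ^ 2 +
          ε * min (lam ^ 2) (‖iteratedFDeriv ℝ 2 u x‖ ^ 2))
      = (∫⁻ x in openCube N x₀ δ, ENNReal.ofReal
            ((1 / ε) * W (fderiv ℝ u x) + ε * ‖iteratedFDeriv ℝ 2 u x‖ ^ 2)) +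
        ∫⁻ x in openCube N x₀ δ,
          ENNReal.ofReal (ε * min (lam ^ 2) (‖iteratedFDeriv ℝ 2 u x‖ ^ 2)) := by
        rw [← lintegral_add_left hFmeas]
        exact lintegral_congr fun x => ENNReal.ofReal_add (hF0 x)
          (mul_nonneg hε.le (le_min (sq_nonneg _) (sq_nonneg _)))
    _ ≤ (∫⁻ x in openCube N x₀ δ, ENNReal.ofReal
            ((1 / ε) * W (fderiv ℝ u x) + ε * ‖iteratedFDeriv ℝ 2 u x‖ ^ 2)) +
        ∫⁻ x in openCube N x₀ δ,
          ENNReal.ofReal (ε * (ρ x - ‖iteratedFDeriv ℝ 2 u x‖) ^ 2) :=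
        add_le_add_right hkey _
    _ = ∫⁻ x in openCube N x₀ δ, ENNReal.ofReal
        ((1 / ε) * W (fderiv ℝ u x) + ε * ‖iteratedFDeriv ℝ 2 u x‖ ^ 2 +
          ε * (ρ x - ‖iteratedFDeriv ℝ 2 u x‖) ^ 2) := by
        rw [← lintegral_add_left hFmeas]
        exact (lintegral_congr fun x => ENNReal.ofReal_add (hF0 x) (by positivity)).symm
end
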